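/- Let X be a connected Hausdorff topological space, let T ⊆ ℝⁿ be a convex subset, and let Ψ : X → T be a continuous proper map. Suppose that for every point x ∈ X there exists an open neighbourhood U ⊆ X of x such that the restriction Ψ|_U : U → Ψ(U) is a convex map and is an open map onto its image Ψ(U). Then: (a) the image Ψ(X) is a convex subset of ℝⁿ; (b) every level set Ψ⁻¹(w), for w ∈ Ψ(X), is connected; (c) Ψ is an open map as a map from X to Ψ(X) (with the subspace topology). -/

import Mathlib

set_option maxHeartbeats 2000000


open Set Metric

/-- A path `c : ℝ → ℝⁿ`, considered on `[0,1]`, is *monotone straight* if either it is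
constant, or its image is the segment `[c 0, c 1]` and it parametrizes this segment
weakly monotonically. -/
def MonotoneStraight {n : ℕ} (c : ℝ → EuclideanSpace ℝ (Fin n)) : Prop :=
  (∀ t ∈ Set.Icc (0:ℝ) 1, c t = c 0) ∨
  ((c '' Set.Icc (0:ℝ) 1 = segment ℝ (c 0) (c 1)) ∧
   ∀ t₁ t₂ t₃ : ℝ, 0 ≤ t₁ → t₁ < t₂ → t₂ < t₃ → t₃ ≤ 1 →
     c t₂ ∈ segment ℝ (c t₁) (c t₃))

/-- The restriction of `Ψ` to `U` is a *convex map*: any two points of `U` are joined by a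
continuous path in `U` whose composition with `Ψ` is monotone straight. -/
def IsConvexMapOn {n : ℕ} {X : Type*} [TopologicalSpace X]
    (Ψ : X → EuclideanSpace ℝ (Fin n)) (U : Set X) : Prop :=
  ∀ x₀ ∈ U, ∀ x₁ ∈ U, ∃ γ : ℝ → X,
    ContinuousOn γ (Set.Icc 0 1) ∧ (∀ t ∈ Set.Icc (0:ℝ) 1, γ t ∈ U) ∧
    γ 0 = x₀ ∧ γ 1 = x₁ ∧ MonotoneStraight (Ψ ∘ γ)

/-- The restriction `Ψ|_U : U → Ψ(U)` is an open map onto its image: the image of every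
relatively open subset of `U` is relatively open in `Ψ(U)`. -/
def IsOpenOnto {n : ℕ} {X : Type*} [TopologicalSpace X]
    (Ψ : X → EuclideanSpace ℝ (Fin n)) (U : Set X) : Prop :=
  ∀ O : Set X, IsOpen O → ∃ V : Set (EuclideanSpace ℝ (Fin n)),
    IsOpen V ∧ Ψ '' (O ∩ U) = V ∩ Ψ '' U

/-- The `Ψ`-distance: the infimum of the lengths (total variations) of `Ψ ∘ γ` over all
continuous paths `γ` in `X` from `x₀` to `x₁`; takes values in `[0,∞]`. -/
noncomputable def psiDist {n : ℕ} {X : Type*} [TopologicalSpace X]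
    (Ψ : X → EuclideanSpace ℝ (Fin n)) (x₀ x₁ : X) : ENNReal :=
  ⨅ γ ∈ {γ : ℝ → X | ContinuousOn γ (Set.Icc 0 1) ∧ γ 0 = x₀ ∧ γ 1 = x₁},
    eVariationOn (Ψ ∘ γ) (Set.Icc 0 1)

local notation "⟪" x ", " y "⟫" => @inner ℝ _ _ x y

section Helpers

variable {n : ℕ} {X : Type*} [TopologicalSpace X]

lemma monotoneStraight_mem_segment {c : ℝ → EuclideanSpace ℝ (Fin n)}
    (h : MonotoneStraight c) {t : ℝ} (ht : t ∈ Set.Icc (0:ℝ) 1) :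
    c t ∈ segment ℝ (c 0) (c 1) := by
  rcases h with h | ⟨him, -⟩
  · have h1 : c 1 = c 0 := h 1 (by norm_num)
    rw [h t ht, h1]
    exact left_mem_segment ℝ _ _
  · rw [← him]; exact ⟨t, ht, rfl⟩

lemma IsConvexMapOn.connect {Ψ : X → EuclideanSpace ℝ (Fin n)} {U : Set X}
    (hU : IsConvexMapOn Ψ U) {p q : X} (hp : p ∈ U) (hq : q ∈ U) :
    ∃ C : Set X, IsCompact C ∧ IsPreconnected C ∧ p ∈ C ∧ q ∈ C ∧ C ⊆ U ∧
      ∀ z ∈ C, Ψ z ∈ segment ℝ (Ψ p) (Ψ q) := by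
  obtain ⟨γ, hγc, hγU, hγ0, hγ1, hms⟩ := hU p hp q hq
  refine ⟨γ '' Icc 0 1, isCompact_Icc.image_of_continuousOn hγc,
    isPreconnected_Icc.image _ hγc, ⟨0, by norm_num, hγ0⟩, ⟨1, by norm_num, hγ1⟩, ?_, ?_⟩
  · rintro z ⟨t, ht, rfl⟩; exact hγU t ht
  · rintro z ⟨t, ht, rfl⟩
    have := monotoneStraight_mem_segment hms ht
    simpa [Function.comp, hγ0, hγ1] using this

lemma IsConvexMapOn.convex_image {Ψ : X → EuclideanSpace ℝ (Fin n)} {U : Set X}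
    (hU : IsConvexMapOn Ψ U) : Convex ℝ (Ψ '' U) := by
  rw [convex_iff_segment_subset]
  rintro _ ⟨p, hp, rfl⟩ _ ⟨q, hq, rfl⟩ v hv
  obtain ⟨C, -, -, -, -, hCU, hseg⟩ := hU.connect hp hq
  obtain ⟨γ, hγc, hγU, hγ0, hγ1, hms⟩ := hU p hp q hq
  rcases hms with h | ⟨him, -⟩
  · have h1 : Ψ q = Ψ p := by
      have := h 1 (by norm_num)
      simpa [Function.comp, hγ0, hγ1] using this
    rw [h1, segment_same] at hv
    exact hv ▸ ⟨p, hp, rfl⟩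
  · have hv' : v ∈ (Ψ ∘ γ) '' Icc 0 1 := by
      rw [him]
      simpa [Function.comp, hγ0, hγ1] using hv
    obtain ⟨t, ht, rfl⟩ := hv'
    exact ⟨γ t, hγU t ht, rfl⟩

lemma chain_reach {Y : Type*} [TopologicalSpace Y] {ι : Type*} (W : ι → Set Y)
    (hW : ∀ i, IsOpen (W i)) {C : Set Y} (hC : IsPreconnected C)
    (hcov : C ⊆ ⋃ i, W i) {x y : Y} (hx : x ∈ C) (hy : y ∈ C) :
    ∃ i₀ i₁, x ∈ W i₀ ∧ y ∈ W i₁ ∧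
      Relation.ReflTransGen (fun i j => (W i ∩ W j ∩ C).Nonempty) i₀ i₁ := by
  obtain ⟨i₀, hxi₀⟩ : ∃ i, x ∈ W i := mem_iUnion.1 (hcov hx)
  set R := fun i j => (W i ∩ W j ∩ C).Nonempty with hR
  set G := {j | Relation.ReflTransGen R i₀ j} with hG
  have hyU : y ∈ ⋃ j ∈ G, W j := by
    by_contra hyV'
    have hcov' : C ⊆ (⋃ j ∈ G, W j) ∪ (⋃ j ∈ Gᶜ, W j) := by
      intro z hz
      obtain ⟨i, hi⟩ := mem_iUnion.1 (hcov hz)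
      by_cases h : i ∈ G
      · exact Or.inl (mem_biUnion h hi)
      · exact Or.inr (mem_biUnion h hi)
    have hyV : y ∈ ⋃ j ∈ Gᶜ, W j := (hcov' hy).resolve_left hyV'
    obtain ⟨z, hzC, hzUV⟩ :=
      hC _ _ (isOpen_biUnion fun j _ => hW j) (isOpen_biUnion fun j _ => hW j) hcov'
        ⟨x, hx, mem_biUnion Relation.ReflTransGen.refl hxi₀⟩ ⟨y, hy, hyV⟩
    obtain ⟨hzU, hzV⟩ := hzUV
    simp only [mem_iUnion, exists_prop] at hzU hzV
    obtain ⟨j, hjG, hzj⟩ := hzU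
    obtain ⟨k, hkG, hzk⟩ := hzV
    exact hkG (hjG.tail ⟨z, ⟨hzj, hzk⟩, hzC⟩)
  simp only [mem_iUnion, exists_prop] at hyU
  obtain ⟨i₁, hi₁G, hyi₁⟩ := hyU
  exact ⟨i₀, i₁, hxi₀, hyi₁, hi₁G⟩

lemma isPreconnected_iInter_of_directed {Y : Type*} [TopologicalSpace Y] [T2Space Y]
    {ι : Type*} [Nonempty ι] {C : ι → Set Y} (hdir : Directed (· ⊇ ·) C)
    (hcomp : ∀ i, IsCompact (C i)) (hconn : ∀ i, IsPreconnected (C i)) :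
    IsPreconnected (⋂ i, C i) := by
  intro u v hu hv hcov ⟨a, haA, hau⟩ ⟨b, hbA, hbv⟩
  by_contra hne
  rw [Set.not_nonempty_iff_eq_empty] at hne
  set A := ⋂ i, C i with hA
  have hAcl : IsClosed A := isClosed_iInter fun i => (hcomp i).isClosed
  have h1 : A ∩ u = A \ v := by
    ext z
    constructor
    · rintro ⟨hzA, hzu⟩
      refine ⟨hzA, fun hzv => ?_⟩
      have : z ∈ A ∩ (u ∩ v) := ⟨hzA, hzu, hzv⟩
      rw [hne] at this; exact this
    · rintro ⟨hzA, hzv⟩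
      exact ⟨hzA, (hcov hzA).resolve_right hzv⟩
  have h2 : A ∩ v = A \ u := by
    ext z
    constructor
    · rintro ⟨hzA, hzv⟩
      refine ⟨hzA, fun hzu => ?_⟩
      have : z ∈ A ∩ (u ∩ v) := ⟨hzA, hzu, hzv⟩
      rw [hne] at this; exact this
    · rintro ⟨hzA, hzu⟩
      exact ⟨hzA, (hcov hzA).resolve_left hzu⟩
  have hAcp : IsCompact A :=
    ((hcomp (Classical.arbitrary ι)).of_isClosed_subset hAcl (iInter_subset _ _))
  have hcu : IsCompact (A ∩ u) := by
    rw [h1]; exact hAcp.of_isClosed_subset (hAcl.sdiff hv) diff_subset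
  have hcv : IsCompact (A ∩ v) := by
    rw [h2]; exact hAcp.of_isClosed_subset (hAcl.sdiff hu) diff_subset
  have hdisj : Disjoint (A ∩ u) (A ∩ v) := by
    rw [Set.disjoint_iff_inter_eq_empty]
    have heq : A ∩ u ∩ (A ∩ v) = A ∩ (u ∩ v) := by
      ext z
      constructor
      · rintro ⟨⟨h1', h2'⟩, ⟨h3, h4⟩⟩; exact ⟨h1', h2', h4⟩
      · rintro ⟨h1', h2', h3⟩; exact ⟨⟨h1', h2'⟩, ⟨h1', h3⟩⟩
    rw [heq]
    exact hne
  obtain ⟨u', v', hu'o, hv'o, hsu', hsv', hdisj'⟩ :=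
    SeparatedNhds.of_isCompact_isCompact hcu hcv hdisj
  have hDcl : ∀ i, IsClosed (C i \ (u' ∪ v')) :=
    fun i => (hcomp i).isClosed.sdiff (hu'o.union hv'o)
  have hDcp : ∀ i, IsCompact (C i \ (u' ∪ v')) :=
    fun i => (hcomp i).of_isClosed_subset (hDcl i) diff_subset
  have hDdir : Directed (· ⊇ ·) (fun i => C i \ (u' ∪ v')) := by
    intro i j
    obtain ⟨k, hk1, hk2⟩ := hdir i j
    exact ⟨k, diff_subset_diff_left hk1, diff_subset_diff_left hk2⟩
  have hDempty : (⋂ i, C i \ (u' ∪ v')) = ∅ := by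
    rw [Set.eq_empty_iff_forall_notMem]
    intro z hz
    rw [mem_iInter] at hz
    have hzA : z ∈ A := by
      rw [hA, mem_iInter]; exact fun i => (hz i).1
    have hzuv : z ∈ u' ∪ v' := by
      rcases hcov hzA with h | h
      · exact Or.inl (hsu' ⟨hzA, h⟩)
      · exact Or.inr (hsv' ⟨hzA, h⟩)
    exact (hz (Classical.arbitrary ι)).2 hzuv
  have : ∃ i, C i \ (u' ∪ v') = ∅ := by
    by_contra hno
    push_neg at hno
    have := IsCompact.nonempty_iInter_of_directed_nonempty_isCompact_isClosed
      (fun i => C i \ (u' ∪ v')) hDdir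
      (fun i => hno i) hDcp hDcl
    rw [hDempty] at this
    exact Set.not_nonempty_empty this
  obtain ⟨i, hi⟩ := this
  have hCi : C i ⊆ u' ∪ v' := by
    rw [Set.diff_eq_empty] at hi; exact hi
  obtain ⟨z, -, hz'⟩ := hconn i u' v' hu'o hv'o hCi
    ⟨a, iInter_subset _ i haA, hsu' ⟨haA, hau⟩⟩
    ⟨b, iInter_subset _ i hbA, hsv' ⟨hbA, hbv⟩⟩
  exact (hdisj'.le_bot hz' : z ∈ (⊥ : Set Y))

lemma isClosed_connectedComponentIn' {Y : Type*} [TopologicalSpace Y] {F : Set Y} {x : Y}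
    (hF : IsClosed F) : IsClosed (connectedComponentIn F x) := by
  by_cases hx : x ∈ F
  · have h1 : IsPreconnected (closure (connectedComponentIn F x)) :=
      isPreconnected_connectedComponentIn.closure
    have h2 : closure (connectedComponentIn F x) ⊆ F :=
      hF.closure_subset_iff.2 (connectedComponentIn_subset F x)
    have h3 : closure (connectedComponentIn F x) ⊆ connectedComponentIn F x :=
      h1.subset_connectedComponentIn (subset_closure (mem_connectedComponentIn hx)) h2
    exact isClosed_of_closure_subset h3
  · rw [connectedComponentIn_eq_empty hx]; exact isClosed_empty

lemma inner_seg_le_max {a b v p w : EuclideanSpace ℝ (Fin n)} (h : v ∈ segment ℝ a b) :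
    ⟪v - p, w⟫ ≤ max (⟪a - p, w⟫) (⟪b - p, w⟫) := by
  obtain ⟨α, β, hα, hβ, hαβ, rfl⟩ := h
  have hv : α • a + β • b - p = α • (a - p) + β • (b - p) := by
    rw [smul_sub, smul_sub]
    rw [show α • a - α • p + (β • b - β • p) = α • a + β • b - (α • p + β • p) by abel]
    rw [← add_smul, hαβ, one_smul]
  rw [hv, inner_add_left, real_inner_smul_left, real_inner_smul_left]
  have h1 : α * ⟪a - p, w⟫ ≤ α * max (⟪a - p, w⟫) (⟪b - p, w⟫) :=
    mul_le_mul_of_nonneg_left (le_max_left _ _) hα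
  have h2 : β * ⟪b - p, w⟫ ≤ β * max (⟪a - p, w⟫) (⟪b - p, w⟫) :=
    mul_le_mul_of_nonneg_left (le_max_right _ _) hβ
  have h3 : α * max (⟪a - p, w⟫) (⟪b - p, w⟫) + β * max (⟪a - p, w⟫) (⟪b - p, w⟫)
      = max (⟪a - p, w⟫) (⟪b - p, w⟫) := by
    rw [← add_mul, hαβ, one_mul]
  linarith [h1, h2]

lemma norm_seg_le_max {a b v : EuclideanSpace ℝ (Fin n)} (h : v ∈ segment ℝ a b) :
    ‖v‖ ≤ max ‖a‖ ‖b‖ := by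
  obtain ⟨α, β, hα, hβ, hαβ, rfl⟩ := h
  calc ‖α • a + β • b‖ ≤ ‖α • a‖ + ‖β • b‖ := norm_add_le _ _
    _ = α * ‖a‖ + β * ‖b‖ := by rw [norm_smul, norm_smul, Real.norm_of_nonneg hα, Real.norm_of_nonneg hβ]
    _ ≤ α * max ‖a‖ ‖b‖ + β * max ‖a‖ ‖b‖ := by
        gcongr
        · exact le_max_left _ _
        · exact le_max_right _ _
    _ = max ‖a‖ ‖b‖ := by rw [← add_mul, hαβ, one_mul]

lemma isCompact_segment' {a b : EuclideanSpace ℝ (Fin n)} : IsCompact (segment ℝ a b) := by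
  rw [segment_eq_image]
  exact isCompact_Icc.image (by continuity)

lemma seg_filled {a b : EuclideanSpace ℝ (Fin n)} {S : Set (EuclideanSpace ℝ (Fin n))}
    (hS : IsPreconnected S) (hSseg : S ⊆ segment ℝ a b) (ha : a ∈ S) (hb : b ∈ S) :
    segment ℝ a b ⊆ S := by
  by_cases hab : a = b
  · subst hab
    rw [segment_same]
    intro m hm
    rw [mem_singleton_iff] at hm
    exact hm ▸ ha
  · intro m hm
    by_contra hmS
    have hba : (0:ℝ) < ‖b - a‖ ^ 2 := by
      have hne : b - a ≠ 0 := sub_ne_zero.2 (Ne.symm hab)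
      have := norm_pos_iff.2 hne
      positivity
    obtain ⟨α, β, hα, hβ, hαβ, hmval⟩ := hm
    set f : EuclideanSpace ℝ (Fin n) → ℝ := fun v => ⟪v - a, b - a⟫ with hf
    have hfc : Continuous f := (continuous_id.sub continuous_const).inner continuous_const
    have hcoord : ∀ (α' β' : ℝ), α' + β' = 1 → f (α' • a + β' • b) = β' * ‖b - a‖^2 := by
      intro α' β' hsum
      have hrw : α' • a + β' • b - a = β' • (b - a) := by
        have hα'' : α' = 1 - β' := by linarith
        subst hα''
        rw [smul_sub, sub_smul, one_smul]
        abel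
      show ⟪α' • a + β' • b - a, b - a⟫ = β' * ‖b - a‖^2
      rw [hrw, real_inner_smul_left, real_inner_self_eq_norm_sq]
    by_cases hb0 : β = 0
    · refine hmS ?_
      have : m = a := by
        rw [← hmval, hb0]
        have : α = 1 := by linarith
        rw [this]
        simp
      exact this ▸ ha
    by_cases hb1 : β = 1
    · refine hmS ?_
      have : m = b := by
        rw [← hmval, hb1]
        have : α = 0 := by linarith
        rw [this]
        simp
      exact this ▸ hb
    have hβpos : 0 < β := lt_of_le_of_ne hβ (Ne.symm hb0)
    have hβlt : β < 1 := lt_of_le_of_ne (by linarith) hb1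
    set τ := β * ‖b - a‖^2 with hτ
    have hcov : S ⊆ f ⁻¹' (Iio τ) ∪ f ⁻¹' (Ioi τ) := by
      intro v hv
      obtain ⟨α', β', hα', hβ', hαβ', rfl⟩ := hSseg hv
      have hval := hcoord α' β' hαβ'
      rcases lt_trichotomy (β' * ‖b - a‖^2) τ with h | h | h
      · left; rw [mem_preimage, mem_Iio, hval]; exact h
      · exfalso
        have hββ : β' = β := mul_right_cancel₀ (ne_of_gt hba) h
        have hαα : α' = α := by linarith
        exact hmS (by rw [← hmval, ← hαα, ← hββ]; exact hv)
      · right; rw [mem_preimage, mem_Ioi, hval]; exact h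
    have hSa : a ∈ f ⁻¹' (Iio τ) := by
      have hfa : f a = 0 := by
        show ⟪a - a, b - a⟫ = 0
        rw [sub_self]
        exact inner_zero_left _
      rw [mem_preimage, mem_Iio, hfa]
      exact mul_pos hβpos hba
    have hSb : b ∈ f ⁻¹' (Ioi τ) := by
      have hfb : f b = ‖b - a‖^2 := by
        show ⟪b - a, b - a⟫ = ‖b - a‖^2
        exact real_inner_self_eq_norm_sq _
      rw [mem_preimage, mem_Ioi, hfb, hτ]
      nlinarith
    obtain ⟨z, hzS, hz1, hz2⟩ := hS _ _ (isOpen_Iio.preimage hfc) (isOpen_Ioi.preimage hfc)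
      hcov ⟨a, ha, hSa⟩ ⟨b, hb, hSb⟩
    have h1 : f z < τ := hz1
    have h2 : τ < f z := hz2
    linarith

lemma tube_lemma' [T2Space X] {Ψ : X → EuclideanSpace ℝ (Fin n)} {T : Set (EuclideanSpace ℝ (Fin n))}
    (hmem : ∀ x, Ψ x ∈ T)
    (hproper : ∀ K : Set (EuclideanSpace ℝ (Fin n)), K ⊆ T → IsCompact K →
      IsCompact (Ψ ⁻¹' K))
    {w : EuclideanSpace ℝ (Fin n)} (hwT : w ∈ T)
    {W : Set X} (hW : IsOpen W) (hFW : Ψ ⁻¹' {w} ⊆ W) :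
    ∃ ε > 0, Ψ ⁻¹' (ball w ε) ⊆ W := by
  by_contra h
  push_neg at h
  have h' : ∀ k : ℕ, ∃ p, Ψ p ∈ ball w (1/((k:ℝ)+1)) ∧ p ∉ W := by
    intro k
    obtain ⟨p, hp1, hp2⟩ := not_subset.1 (h (1/((k:ℝ)+1)) (by positivity))
    exact ⟨p, hp1, hp2⟩
  choose p hp1 hp2 using h'
  have htend : Filter.Tendsto (fun k => Ψ (p k)) Filter.atTop (nhds w) := by
    rw [tendsto_iff_dist_tendsto_zero]
    have hb : ∀ k : ℕ, dist (Ψ (p k)) w ≤ 1/((k:ℝ)+1) := fun k => le_of_lt (mem_ball.1 (hp1 k))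
    have hz : Filter.Tendsto (fun k : ℕ => 1/((k:ℝ)+1)) Filter.atTop (nhds 0) :=
      tendsto_one_div_add_atTop_nhds_zero_nat
    exact squeeze_zero (fun k => dist_nonneg) hb hz
  set Q : ℕ → Set (EuclideanSpace ℝ (Fin n)) :=
    fun m => insert w (Set.range fun k => Ψ (p (k + m))) with hQ
  have hQcomp : ∀ m, IsCompact (Q m) := by
    intro m
    exact (htend.comp (Filter.tendsto_add_atTop_nat m)).isCompact_insert_range
  have hQT : ∀ m, Q m ⊆ T := by
    intro m z hz
    rcases hz with rfl | ⟨k, rfl⟩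
    · exact hwT
    · exact hmem _
  set D : ℕ → Set X := fun m => Ψ ⁻¹' (Q m) ∩ Wᶜ with hD
  have hDcomp : ∀ m, IsCompact (D m) := fun m =>
    (hproper _ (hQT m) (hQcomp m)).inter_right hW.isClosed_compl
  have hDcl : ∀ m, IsClosed (D m) := fun m => (hDcomp m).isClosed
  have hQanti : ∀ m m' : ℕ, m ≤ m' → Q m' ⊆ Q m := by
    intro m m' hmm z hz
    rcases hz with rfl | ⟨k, rfl⟩
    · exact Or.inl rfl
    · have harg : k + (m' - m) + m = k + m' := by omega
      refine Or.inr ⟨k + (m' - m), ?_⟩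
      show Ψ (p (k + (m' - m) + m)) = Ψ (p (k + m'))
      rw [harg]
  have hDdir : Directed (· ⊇ ·) D := by
    intro i j
    refine ⟨max i j, ?_, ?_⟩
    · exact inter_subset_inter_left _ (preimage_mono (hQanti i _ (le_max_left i j)))
    · exact inter_subset_inter_left _ (preimage_mono (hQanti j _ (le_max_right i j)))
  have hDne : ∀ m, (D m).Nonempty := by
    intro m
    refine ⟨p m, ?_, hp2 m⟩
    rw [mem_preimage, hQ]
    exact Or.inr ⟨0, by simp⟩
  obtain ⟨q, hq⟩ := IsCompact.nonempty_iInter_of_directed_nonempty_isCompact_isClosed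
    D hDdir hDne hDcomp hDcl
  rw [mem_iInter] at hq
  have hqW : q ∉ W := (hq 0).2
  have hqw : Ψ q = w := by
    by_contra hne
    have hc : 0 < dist (Ψ q) w := dist_pos.2 hne
    obtain ⟨m, hm⟩ := exists_nat_one_div_lt hc
    have hqm := (hq m).1
    rw [mem_preimage, hQ] at hqm
    rcases hqm with heq | ⟨k, hk⟩
    · exact hne heq
    · change Ψ (p (k + m)) = Ψ q at hk
      have hd := mem_ball.1 (hp1 (k + m))
      rw [hk] at hd
      have h1 : (1:ℝ)/((k:ℝ)+(m:ℝ)+1) ≤ 1/((m:ℝ)+1) := by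
        apply one_div_le_one_div_of_le
        · positivity
        · have : (0:ℝ) ≤ (k:ℝ) := Nat.cast_nonneg k
          linarith
      have : dist (Ψ q) w < 1/((m:ℝ)+1) := by
        have hcast : ((k + m : ℕ):ℝ) = (k:ℝ) + (m:ℝ) := by push_cast; ring
        rw [hcast] at hd
        linarith
      linarith
  exact hqW (hFW (by rw [mem_preimage, hqw]; exact rfl))

lemma descent [T2Space X]
    {Ψ : X → EuclideanSpace ℝ (Fin n)} {T : Set (EuclideanSpace ℝ (Fin n))}
    (hmem : ∀ x, Ψ x ∈ T)
    (hproper : ∀ K : Set (EuclideanSpace ℝ (Fin n)), K ⊆ T → IsCompact K →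
      IsCompact (Ψ ⁻¹' K))
    (U : X → Set X) (hUo : ∀ z, IsOpen (U z)) (hUm : ∀ z, z ∈ U z)
    (hUc : ∀ z, IsConvexMapOn Ψ (U z)) (hUt : ∀ z, IsOpenOnto Ψ (U z))
    (x y : X) {K : Set (EuclideanSpace ℝ (Fin n))}
    (hKcp : IsCompact K) (hKcv : Convex ℝ K) (hKT : K ⊆ T)
    (hσK : segment ℝ (Ψ x) (Ψ y) ⊆ K)
    (hyK : y ∈ connectedComponentIn (Ψ ⁻¹' K) x)
    {u₀ : EuclideanSpace ℝ (Fin n)} (hu₀K : u₀ ∈ K)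
    (hu₀σ : u₀ ∉ segment ℝ (Ψ x) (Ψ y)) :
    ∃ K' : Set (EuclideanSpace ℝ (Fin n)), IsCompact K' ∧ Convex ℝ K' ∧ K' ⊆ T ∧
      segment ℝ (Ψ x) (Ψ y) ⊆ K' ∧ y ∈ connectedComponentIn (Ψ ⁻¹' K') x ∧
      K' ⊆ K ∧ K' ≠ K := by
  classical
  set σ := segment ℝ (Ψ x) (Ψ y) with hσdef
  have hσcv : Convex ℝ σ := convex_segment _ _
  have hσcl : IsClosed σ := isCompact_segment'.isClosed
  obtain ⟨f, c, hfc, hcu₀⟩ := geometric_hahn_banach_closed_point hσcv hσcl hu₀σ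
  set φ := (InnerProductSpace.toDual ℝ (EuclideanSpace ℝ (Fin n))).symm f with hφdef
  have hφ : ∀ v : EuclideanSpace ℝ (Fin n), ⟪φ, v⟫ = f v := fun v =>
    InnerProductSpace.toDual_symm_apply
  set B := (max ‖Ψ x‖ ‖Ψ y‖) ^ 2 with hBdef
  have hB0 : 0 ≤ B := sq_nonneg _
  have hgap : 0 < f u₀ - c := sub_pos.2 hcu₀
  set M := (B + 1 + ‖u₀‖^2) / (2 * (f u₀ - c)) with hMdef
  have hMnn : 0 ≤ M := div_nonneg (by positivity) (by linarith)
  set p := -(M • φ) with hpdef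
  have hnormsq : ∀ v : EuclideanSpace ℝ (Fin n),
      ‖v - p‖^2 = ‖v‖^2 + 2*M*(f v) + M^2*‖φ‖^2 := by
    intro v
    rw [hpdef, sub_neg_eq_add, norm_add_sq_real, real_inner_smul_right, norm_smul,
      real_inner_comm, hφ, Real.norm_eq_abs, abs_of_nonneg hMnn, mul_pow]
    ring
  have hkey1 : ∀ v ∈ σ, ‖v - p‖^2 + 1 ≤ ‖u₀ - p‖^2 := by
    intro v hv
    have h1 : ‖v‖ ≤ max ‖Ψ x‖ ‖Ψ y‖ := norm_seg_le_max hv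
    have h2 : f v < c := hfc v hv
    have h3 : ‖v‖^2 ≤ B := by
      rw [hBdef]
      have := norm_nonneg v
      nlinarith
    rw [hnormsq v, hnormsq u₀]
    have hM2 : 2*M*(f u₀ - c) = B + 1 + ‖u₀‖^2 := by
      rw [hMdef]
      field_simp
    have h4 : 2*M*(f v) ≤ 2*M*c := by nlinarith
    nlinarith [sq_nonneg ‖u₀‖]
  obtain ⟨e, heK, heMax⟩ := hKcp.exists_isMaxOn ⟨u₀, hu₀K⟩
    ((continuous_id.sub continuous_const).norm.continuousOn :
      ContinuousOn (fun v => ‖v - p‖) K)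
  have he : ∀ v ∈ K, ‖v - p‖ ≤ ‖e - p‖ := fun v hv => heMax hv
  set R2 := ‖e - p‖^2 with hR2def
  set L : EuclideanSpace ℝ (Fin n) → ℝ := fun v => ⟪v - p, e - p⟫ with hLdef
  have hLcont : Continuous L := (continuous_id.sub continuous_const).inner continuous_const
  have hLe : L e = R2 := real_inner_self_eq_norm_sq _
  have hLid : ∀ v, L v = (‖v - p‖^2 + R2 - ‖v - e‖^2)/2 := by
    intro v
    have hve : v - e = (v - p) - (e - p) := by abel
    have hns := norm_sub_sq_real (v - p) (e - p)
    rw [← hve] at hns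
    show ⟪v - p, e - p⟫ = (‖v - p‖^2 + R2 - ‖v - e‖^2)/2
    rw [hR2def]
    linarith
  have hsqle : ∀ v ∈ K, ‖v - p‖^2 ≤ R2 := by
    intro v hv
    have h1 := he v hv
    rw [hR2def]
    nlinarith [norm_nonneg (v - p), norm_nonneg (e - p)]
  have hKlt : ∀ v ∈ K, v ≠ e → L v < R2 := by
    intro v hv hne
    rw [hLid v]
    have h1 := hsqle v hv
    have h2 : 0 < ‖v - e‖^2 := by
      have h3 : v - e ≠ 0 := sub_ne_zero.2 hne
      have h4 := norm_pos_iff.2 h3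
      positivity
    linarith
  have hσle : ∀ v ∈ σ, L v ≤ R2 - 1/2 := by
    intro v hv
    rw [hLid v]
    have h1 := hkey1 v hv
    have h2 : ‖u₀ - p‖^2 ≤ R2 := hsqle u₀ hu₀K
    have h3 : 0 ≤ ‖v - e‖^2 := sq_nonneg _
    linarith
  set C := connectedComponentIn (Ψ ⁻¹' K) x with hCdef
  have hxK : x ∈ Ψ ⁻¹' K := by
    rw [mem_preimage]; exact hσK (left_mem_segment ℝ _ _)
  have hxC : x ∈ C := mem_connectedComponentIn hxK
  have hCpre : IsPreconnected C := isPreconnected_connectedComponentIn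
  have hCsub : C ⊆ Ψ ⁻¹' K := connectedComponentIn_subset _ _
  obtain ⟨i₀, i₁, hxi₀, hyi₁, hreach⟩ := chain_reach U hUo hCpre
    (fun z _ => mem_iUnion.2 ⟨z, hUm z⟩) hxC hyK
  set P : X → Prop := fun i => ∃ (C' : Set X) (b : ℝ), IsCompact C' ∧ IsPreconnected C' ∧
    x ∈ C' ∧ b < R2 ∧ (∀ z ∈ C', Ψ z ∈ K ∧ L (Ψ z) ≤ b) ∧ ∃ g ∈ C', g ∈ U i with hPdef
  have hbase : P i₀ := by
    refine ⟨{x}, L (Ψ x), isCompact_singleton, isPreconnected_singleton, rfl, ?_, ?_,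
      x, rfl, hxi₀⟩
    · have := hσle (Ψ x) (left_mem_segment ℝ _ _); linarith
    · intro z hz
      rw [mem_singleton_iff] at hz
      subst hz
      exact ⟨hxK, le_refl _⟩
  have hstep : ∀ i i' : X, (U i ∩ U i' ∩ C).Nonempty → P i → P i' := by
    intro i i' hrel hPi
    obtain ⟨C', b, hC'cp, hC'pre, hxC', hbR, hbound, g, hgC', hgUi⟩ := hPi
    obtain ⟨cpt, ⟨hcUi, hcUi'⟩, hcC⟩ := hrel
    have hgK : Ψ g ∈ K := (hbound g hgC').1
    have hgL : L (Ψ g) ≤ b := (hbound g hgC').2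
    have hgate : ∃ g', g' ∈ U i ∧ g' ∈ U i' ∧ Ψ g' ∈ K ∧ L (Ψ g') < R2 := by
      by_cases hce : Ψ cpt = e
      · have hgne : Ψ g ≠ e := by
          intro hh
          rw [hh, hLe] at hgL
          linarith
        obtain ⟨V, hVo, hVeq⟩ := hUt i (U i') (hUo i')
        have heV : e ∈ V := by
          have h1 : Ψ cpt ∈ Ψ '' (U i' ∩ U i) := ⟨cpt, ⟨hcUi', hcUi⟩, rfl⟩
          rw [hVeq] at h1
          rw [← hce]
          exact h1.1
        obtain ⟨ρ, hρpos, hρ⟩ := Metric.isOpen_iff.1 hVo e heV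
        set d := ‖Ψ g - e‖ with hddef
        have hdpos : 0 < d := norm_pos_iff.2 (sub_ne_zero.2 hgne)
        set t := min 1 (ρ / (2 * d)) with htdef
        have htpos : 0 < t := lt_min one_pos (by positivity)
        have ht1 : t ≤ 1 := min_le_left _ _
        set u := e + t • (Ψ g - e) with hudef
        have huseg : u ∈ segment ℝ e (Ψ g) := by
          refine ⟨1 - t, t, by linarith, le_of_lt htpos, by ring, ?_⟩
          rw [hudef]
          module
        have heSi : e ∈ Ψ '' U i := ⟨cpt, hcUi, hce⟩
        have hgSi : Ψ g ∈ Ψ '' U i := ⟨g, hgUi, rfl⟩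
        have huSi : u ∈ Ψ '' U i := ((hUc i).convex_image.segment_subset heSi hgSi) huseg
        have huK : u ∈ K := (hKcv.segment_subset heK hgK) huseg
        have huV : u ∈ V := by
          apply hρ
          rw [mem_ball, dist_eq_norm, hudef]
          have harw : e + t • (Ψ g - e) - e = t • (Ψ g - e) := by abel
          rw [harw, norm_smul, Real.norm_of_nonneg (le_of_lt htpos), ← hddef]
          have h2 : t ≤ ρ / (2*d) := min_le_right _ _
          have hdne : d ≠ 0 := ne_of_gt hdpos
          have h3 : (ρ/(2*d)) * d = ρ/2 := by
            field_simp
          calc t * d ≤ (ρ/(2*d)) * d := by nlinarith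
            _ = ρ/2 := h3
            _ < ρ := by linarith
        have humem : u ∈ Ψ '' (U i' ∩ U i) := by rw [hVeq]; exact ⟨huV, huSi⟩
        obtain ⟨g', ⟨hg'Ui', hg'Ui⟩, hg'val⟩ := humem
        refine ⟨g', hg'Ui, hg'Ui', by rw [hg'val]; exact huK, ?_⟩
        rw [hg'val]
        have hLu : L u = (1-t) * L e + t * L (Ψ g) := by
          have hurw : u - p = (1-t) • (e - p) + t • (Ψ g - p) := by
            rw [hudef]
            module
          show ⟪u - p, e - p⟫ = (1-t) * L e + t * L (Ψ g)
          rw [hurw, inner_add_left, real_inner_smul_left, real_inner_smul_left]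
        rw [hLu, hLe]
        have hgR : L (Ψ g) < R2 := lt_of_le_of_lt hgL hbR
        nlinarith
      · exact ⟨cpt, hcUi, hcUi', hCsub hcC, hKlt _ (hCsub hcC) hce⟩
    obtain ⟨g', hg'Ui, hg'Ui', hg'K, hg'L⟩ := hgate
    obtain ⟨D, hDcp, hDpre, hgD, hg'D, hDU, hDseg⟩ := (hUc i).connect hgUi hg'Ui
    refine ⟨C' ∪ D, max b (L (Ψ g')), hC'cp.union hDcp,
      hC'pre.union g hgC' hgD hDpre, Or.inl hxC', max_lt hbR hg'L, ?_,
      g', Or.inr hg'D, hg'Ui'⟩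
    rintro z (hz | hz)
    · obtain ⟨h1, h2⟩ := hbound z hz
      exact ⟨h1, le_trans h2 (le_max_left _ _)⟩
    · have hzseg := hDseg z hz
      refine ⟨hKcv.segment_subset hgK hg'K hzseg, ?_⟩
      have h1 := inner_seg_le_max (p := p) (w := e - p) hzseg
      have h2 : max (⟪Ψ g - p, e - p⟫) (⟪Ψ g' - p, e - p⟫) ≤ max b (L (Ψ g')) :=
        max_le_max hgL (le_refl _)
      exact le_trans h1 h2
  have hmot : ∀ j, Relation.ReflTransGen (fun i j => (U i ∩ U j ∩ C).Nonempty) i₀ j → P j := by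
    intro j h
    induction h with
    | refl => exact hbase
    | tail h1 h2 ih => exact hstep _ _ h2 ih
  have hPy : P i₁ := hmot i₁ hreach
  obtain ⟨C', b, hC'cp, hC'pre, hxC', hbR, hbound, g, hgC', hgUi₁⟩ := hPy
  obtain ⟨D, hDcp, hDpre, hgD, hyD, hDU, hDseg⟩ := (hUc i₁).connect hgUi₁ hyi₁
  set bf := max b (R2 - 1/2) with hbfdef
  have hbfR : bf < R2 := max_lt hbR (by linarith)
  set K' := K ∩ {v | L v ≤ bf} with hK'def
  have hK'cp : IsCompact K' := hKcp.inter_right (isClosed_le hLcont continuous_const)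
  have hK'cv : Convex ℝ K' := by
    rw [convex_iff_segment_subset]
    rintro v₁ ⟨hv₁K, hv₁L⟩ v₂ ⟨hv₂K, hv₂L⟩ v hv
    refine ⟨hKcv.segment_subset hv₁K hv₂K hv, ?_⟩
    have h1 := inner_seg_le_max (p := p) (w := e - p) hv
    have h2 : max (⟪v₁ - p, e - p⟫) (⟪v₂ - p, e - p⟫) ≤ bf := max_le hv₁L hv₂L
    exact le_trans h1 h2
  have hK'T : K' ⊆ T := fun v hv => hKT hv.1
  have hσK' : σ ⊆ K' := fun v hv => ⟨hσK hv, le_trans (hσle v hv) (le_max_right _ _)⟩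
  have hfin : C' ∪ D ⊆ Ψ ⁻¹' K' := by
    rintro z (hz | hz)
    · obtain ⟨h1, h2⟩ := hbound z hz
      exact ⟨h1, le_trans h2 (le_max_left _ _)⟩
    · have hzseg := hDseg z hz
      have hyσ : Ψ y ∈ σ := right_mem_segment ℝ _ _
      refine ⟨hKcv.segment_subset (hbound g hgC').1 (hσK hyσ) hzseg, ?_⟩
      have h1 := inner_seg_le_max (p := p) (w := e - p) hzseg
      have h2 : L (Ψ g) ≤ b := (hbound g hgC').2
      have h3 : L (Ψ y) ≤ R2 - 1/2 := hσle _ hyσ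
      have h4 : max (⟪Ψ g - p, e - p⟫) (⟪Ψ y - p, e - p⟫) ≤ bf :=
        max_le (le_trans h2 (le_max_left _ _)) (le_trans h3 (le_max_right _ _))
      exact le_trans h1 h4
  have hyK' : y ∈ connectedComponentIn (Ψ ⁻¹' K') x :=
    ((hC'pre.union g hgC' hgD hDpre).subset_connectedComponentIn
      (Or.inl hxC') hfin) (Or.inr hyD)
  refine ⟨K', hK'cp, hK'cv, hK'T, hσK', hyK', inter_subset_left, ?_⟩
  intro heq
  have he' : e ∈ K' := heq ▸ heK
  have hle : L e ≤ bf := he'.2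
  rw [hLe] at hle
  linarith

lemma aux_M [T2Space X] [ConnectedSpace X]
    {Ψ : X → EuclideanSpace ℝ (Fin n)} {T : Set (EuclideanSpace ℝ (Fin n))}
    (hT : Convex ℝ T) (hmem : ∀ x, Ψ x ∈ T)
    (hproper : ∀ K : Set (EuclideanSpace ℝ (Fin n)), K ⊆ T → IsCompact K →
      IsCompact (Ψ ⁻¹' K))
    (U : X → Set X) (hUo : ∀ z, IsOpen (U z)) (hUm : ∀ z, z ∈ U z)
    (hUc : ∀ z, IsConvexMapOn Ψ (U z)) (hUt : ∀ z, IsOpenOnto Ψ (U z))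
    (x y : X) :
    y ∈ connectedComponentIn (Ψ ⁻¹' segment ℝ (Ψ x) (Ψ y)) x := by
  classical
  set σ := segment ℝ (Ψ x) (Ψ y) with hσdef
  have hinit : ∃ K₀ : Set (EuclideanSpace ℝ (Fin n)), IsCompact K₀ ∧ Convex ℝ K₀ ∧
      K₀ ⊆ T ∧ σ ⊆ K₀ ∧ y ∈ connectedComponentIn (Ψ ⁻¹' K₀) x := by
    obtain ⟨i₀, i₁, hxi₀, hyi₁, hreach⟩ := chain_reach U hUo isPreconnected_univ
      (fun z _ => mem_iUnion.2 ⟨z, hUm z⟩) (mem_univ x) (mem_univ y)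
    set P : X → Prop := fun i => ∃ (C' : Set X) (A : Set (EuclideanSpace ℝ (Fin n))),
      A.Finite ∧ IsPreconnected C' ∧ x ∈ C' ∧ Ψ x ∈ A ∧ A ⊆ T ∧
      (∀ z ∈ C', Ψ z ∈ convexHull ℝ A) ∧ ∃ g ∈ C', g ∈ U i ∧ Ψ g ∈ A with hPdef
    have hbase : P i₀ := by
      refine ⟨{x}, {Ψ x}, finite_singleton _, isPreconnected_singleton, rfl, rfl,
        ?_, ?_, x, rfl, hxi₀, rfl⟩
      · intro v hv
        rw [mem_singleton_iff] at hv
        subst hv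
        exact hmem x
      · intro z hz
        rw [mem_singleton_iff] at hz
        subst hz
        exact subset_convexHull ℝ _ rfl
    have hstep : ∀ i i' : X, (U i ∩ U i' ∩ univ).Nonempty → P i → P i' := by
      intro i i' hrel hPi
      obtain ⟨C', A, hAfin, hC'pre, hxC', hΨxA, hAT, hhull, g, hgC', hgUi, hgA⟩ := hPi
      obtain ⟨cpt, ⟨hcUi, hcUi'⟩, -⟩ := hrel
      obtain ⟨D, hDcp, hDpre, hgD, hcD, hDU, hDseg⟩ := (hUc i).connect hgUi hcUi
      refine ⟨C' ∪ D, A ∪ {Ψ cpt}, hAfin.union (finite_singleton _),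
        hC'pre.union g hgC' hgD hDpre, Or.inl hxC', Or.inl hΨxA, ?_, ?_,
        cpt, Or.inr hcD, hcUi', Or.inr rfl⟩
      · rintro v (hv | hv)
        · exact hAT hv
        · rw [mem_singleton_iff] at hv
          subst hv
          exact hmem cpt
      · rintro z (hz | hz)
        · exact convexHull_mono subset_union_left (hhull z hz)
        · have hzseg := hDseg z hz
          have h1 : Ψ g ∈ convexHull ℝ (A ∪ {Ψ cpt}) :=
            subset_convexHull ℝ _ (Or.inl hgA)
          have h2 : Ψ cpt ∈ convexHull ℝ (A ∪ {Ψ cpt}) :=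
            subset_convexHull ℝ _ (Or.inr rfl)
          exact (convex_convexHull ℝ _).segment_subset h1 h2 hzseg
    have hmot : ∀ j, Relation.ReflTransGen (fun i j => (U i ∩ U j ∩ univ).Nonempty) i₀ j → P j := by
      intro j h
      induction h with
      | refl => exact hbase
      | tail h1 h2 ih => exact hstep _ _ h2 ih
    have hPy : P i₁ := hmot i₁ hreach
    obtain ⟨C', A, hAfin, hC'pre, hxC', hΨxA, hAT, hhull, g, hgC', hgUi₁, hgA⟩ := hPy
    obtain ⟨D, hDcp, hDpre, hgD, hyD, hDU, hDseg⟩ := (hUc i₁).connect hgUi₁ hyi₁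
    set Af := A ∪ {Ψ y} with hAfdef
    set K₀ := convexHull ℝ Af with hK₀def
    have hAfT : Af ⊆ T := by
      rintro v (hv | hv)
      · exact hAT hv
      · rw [mem_singleton_iff] at hv
        subst hv
        exact hmem y
    have hK₀cp : IsCompact K₀ := (hAfin.union (finite_singleton _)).isCompact_convexHull (𝕜 := ℝ)
    have hK₀cv : Convex ℝ K₀ := convex_convexHull ℝ _
    have hK₀T : K₀ ⊆ T := convexHull_min hAfT hT
    have hσK₀ : σ ⊆ K₀ := by
      have h1 : Ψ x ∈ K₀ := subset_convexHull ℝ _ (Or.inl hΨxA)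
      have h2 : Ψ y ∈ K₀ := subset_convexHull ℝ _ (Or.inr rfl)
      exact hK₀cv.segment_subset h1 h2
    have hsub : C' ∪ D ⊆ Ψ ⁻¹' K₀ := by
      rintro z (hz | hz)
      · exact convexHull_mono subset_union_left (hhull z hz)
      · have hzseg := hDseg z hz
        have h1 : Ψ g ∈ K₀ := subset_convexHull ℝ _ (Or.inl hgA)
        have h2 : Ψ y ∈ K₀ := subset_convexHull ℝ _ (Or.inr rfl)
        exact hK₀cv.segment_subset h1 h2 hzseg
    refine ⟨K₀, hK₀cp, hK₀cv, hK₀T, hσK₀, ?_⟩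
    exact ((hC'pre.union g hgC' hgD hDpre).subset_connectedComponentIn
      (Or.inl hxC') hsub) (Or.inr hyD)
  obtain ⟨K₀, hK₀cp, hK₀cv, hK₀T, hσK₀, hyK₀⟩ := hinit
  set S : Set (Set (EuclideanSpace ℝ (Fin n))) :=
    {K | IsCompact K ∧ Convex ℝ K ∧ K ⊆ T ∧ σ ⊆ K ∧
      y ∈ connectedComponentIn (Ψ ⁻¹' K) x} with hSdef
  have hchaincond : ∀ c ⊆ S, IsChain (· ⊆ ·) c → c.Nonempty →
      ∃ lb ∈ S, ∀ s ∈ c, lb ⊆ s := by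
    intro c hcS hchain hcne
    refine ⟨⋂₀ c, ?_, fun s hs => sInter_subset_of_mem hs⟩
    obtain ⟨K₁, hK₁c⟩ := hcne
    have hK₁S := hcS hK₁c
    have hcl : IsClosed (⋂₀ c) := isClosed_sInter fun K hK => ((hcS hK).1).isClosed
    have hcp : IsCompact (⋂₀ c) :=
      hK₁S.1.of_isClosed_subset hcl (sInter_subset_of_mem hK₁c)
    have hcv : Convex ℝ (⋂₀ c) := convex_sInter fun K hK => (hcS hK).2.1
    have hTT : ⋂₀ c ⊆ T := (sInter_subset_of_mem hK₁c).trans hK₁S.2.2.1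
    have hσc : σ ⊆ ⋂₀ c := subset_sInter fun K hK => (hcS hK).2.2.2.1
    haveI : Nonempty ↥c := ⟨⟨K₁, hK₁c⟩⟩
    set Cc : ↥c → Set X := fun K => connectedComponentIn (Ψ ⁻¹' K.1) x with hCcdef
    have hKcp : ∀ K : ↥c, IsCompact (Ψ ⁻¹' K.1) := fun K =>
      hproper K.1 ((hcS K.2).2.2.1) ((hcS K.2).1)
    have hCccl : ∀ K : ↥c, IsClosed (Cc K) := fun K =>
      isClosed_connectedComponentIn' (hKcp K).isClosed
    have hCccp : ∀ K : ↥c, IsCompact (Cc K) := fun K =>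
      (hKcp K).of_isClosed_subset (hCccl K) (connectedComponentIn_subset _ _)
    have hCcpre : ∀ K : ↥c, IsPreconnected (Cc K) := fun _ =>
      isPreconnected_connectedComponentIn
    have hdir : Directed (· ⊇ ·) Cc := by
      intro K₁' K₂'
      rcases eq_or_ne K₁' K₂' with h | h
      · exact ⟨K₁', subset_rfl, h ▸ subset_rfl⟩
      · rcases hchain K₁'.2 K₂'.2 (fun hh => h (Subtype.ext hh)) with h' | h'
        · exact ⟨K₁', subset_rfl, connectedComponentIn_mono x (preimage_mono h')⟩
        · exact ⟨K₂', connectedComponentIn_mono x (preimage_mono h'), subset_rfl⟩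
    have hipre : IsPreconnected (⋂ K, Cc K) :=
      isPreconnected_iInter_of_directed hdir hCccp hCcpre
    have hxin : x ∈ ⋂ K, Cc K := mem_iInter.2 fun K => mem_connectedComponentIn
      (by rw [mem_preimage]; exact (hcS K.2).2.2.2.1 (left_mem_segment ℝ _ _))
    have hyin : y ∈ ⋂ K, Cc K := mem_iInter.2 fun K => (hcS K.2).2.2.2.2
    have hsub : (⋂ K, Cc K) ⊆ Ψ ⁻¹' (⋂₀ c) := by
      intro z hz
      rw [mem_preimage, mem_sInter]
      intro K hK
      have h5 : z ∈ Ψ ⁻¹' (K : Set (EuclideanSpace ℝ (Fin n))) :=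
        connectedComponentIn_subset _ _ (mem_iInter.1 hz ⟨K, hK⟩)
      exact h5
    exact ⟨hcp, hcv, hTT, hσc, (hipre.subset_connectedComponentIn hxin hsub) hyin⟩
  obtain ⟨m, hmK₀, hmin⟩ := zorn_superset_nonempty S hchaincond K₀
    ⟨hK₀cp, hK₀cv, hK₀T, hσK₀, hyK₀⟩
  have hmS : m ∈ S := hmin.1
  have hmeq : m = σ := by
    have hm1 : σ ⊆ m := hmS.2.2.2.1
    refine Subset.antisymm ?_ hm1
    by_contra hns
    obtain ⟨u₀, hu₀m, hu₀σ⟩ := not_subset.1 hns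
    obtain ⟨K', h1, h2, h3, h4, h5, h6, h7⟩ := descent hmem hproper U hUo hUm hUc hUt x y
      hmS.1 hmS.2.1 hmS.2.2.1 hm1 hmS.2.2.2.2 hu₀m hu₀σ
    exact h7 (Subset.antisymm h6 (hmin.2 ⟨h1, h2, h3, h4, h5⟩ h6))
  rw [hσdef] at hmeq
  have := hmS.2.2.2.2
  rw [hmeq] at this
  exact this

lemma germ_transfer {Ψ : X → EuclideanSpace ℝ (Fin n)}
    {Uz Uz' : Set X} (hUzo : IsOpen Uz) (hUz'o : IsOpen Uz')
    (ht : IsOpenOnto Ψ Uz) (ht' : IsOpenOnto Ψ Uz')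
    {z' : X} (hz'Uz : z' ∈ Uz) (hz'Uz' : z' ∈ Uz') {w : EuclideanSpace ℝ (Fin n)}
    (hz'w : Ψ z' = w) :
    ∃ δ > 0, (Ψ '' Uz) ∩ ball w δ ⊆ Ψ '' Uz' ∧ (Ψ '' Uz') ∩ ball w δ ⊆ Ψ '' Uz := by
  obtain ⟨V, hVo, hVeq⟩ := ht Uz' hUz'o
  obtain ⟨V', hV'o, hV'eq⟩ := ht' Uz hUzo
  have hwV : w ∈ V := by
    have h1 : w ∈ Ψ '' (Uz' ∩ Uz) := ⟨z', ⟨hz'Uz', hz'Uz⟩, hz'w⟩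
    rw [hVeq] at h1
    exact h1.1
  have hwV' : w ∈ V' := by
    have h1 : w ∈ Ψ '' (Uz ∩ Uz') := ⟨z', ⟨hz'Uz, hz'Uz'⟩, hz'w⟩
    rw [hV'eq] at h1
    exact h1.1
  obtain ⟨δ₁, hδ₁pos, hδ₁⟩ := Metric.isOpen_iff.1 hVo w hwV
  obtain ⟨δ₂, hδ₂pos, hδ₂⟩ := Metric.isOpen_iff.1 hV'o w hwV'
  refine ⟨min δ₁ δ₂, lt_min hδ₁pos hδ₂pos, ?_, ?_⟩
  · rintro v ⟨hv1, hv2⟩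
    have hvV : v ∈ V := hδ₁ (ball_subset_ball (min_le_left _ _) hv2)
    have : v ∈ Ψ '' (Uz' ∩ Uz) := by rw [hVeq]; exact ⟨hvV, hv1⟩
    obtain ⟨q, ⟨hq1, -⟩, hq⟩ := this
    exact ⟨q, hq1, hq⟩
  · rintro v ⟨hv1, hv2⟩
    have hvV : v ∈ V' := hδ₂ (ball_subset_ball (min_le_right _ _) hv2)
    have : v ∈ Ψ '' (Uz ∩ Uz') := by rw [hV'eq]; exact ⟨hvV, hv1⟩
    obtain ⟨q, ⟨hq1, -⟩, hq⟩ := this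
    exact ⟨q, hq1, hq⟩

end Helpers

theorem convex_image_connected_fibers_open' {n : ℕ} {X : Type*} [TopologicalSpace X]
    [T2Space X] [ConnectedSpace X]
    (T : Set (EuclideanSpace ℝ (Fin n))) (hT : Convex ℝ T)
    (Ψ : X → EuclideanSpace ℝ (Fin n)) (hcont : Continuous Ψ) (hmem : ∀ x, Ψ x ∈ T)
    (hproper : ∀ K : Set (EuclideanSpace ℝ (Fin n)), K ⊆ T → IsCompact K →
      IsCompact (Ψ ⁻¹' K))
    (hloc : ∀ x : X, ∃ U : Set X, IsOpen U ∧ x ∈ U ∧ IsConvexMapOn Ψ U ∧ IsOpenOnto Ψ U) :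
    Convex ℝ (Set.range Ψ) ∧
    (∀ w ∈ Set.range Ψ, IsConnected (Ψ ⁻¹' {w})) ∧
    IsOpenOnto Ψ Set.univ := by
  classical
  choose U hUo hUm hUc hUt using hloc
  have hM : ∀ x y : X, y ∈ connectedComponentIn (Ψ ⁻¹' segment ℝ (Ψ x) (Ψ y)) x :=
    fun x y => aux_M hT hmem hproper U hUo hUm hUc hUt x y
  have hB : ∀ w ∈ Set.range Ψ, IsConnected (Ψ ⁻¹' {w}) := by
    rintro w ⟨x₀, rfl⟩
    refine ⟨⟨x₀, by rw [mem_preimage, mem_singleton_iff]⟩, ?_⟩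
    apply isPreconnected_of_forall_pair
    intro x₁ hx₁ x₂ hx₂
    rw [mem_preimage, mem_singleton_iff] at hx₁ hx₂
    refine ⟨connectedComponentIn (Ψ ⁻¹' segment ℝ (Ψ x₁) (Ψ x₂)) x₁, ?_,
      mem_connectedComponentIn (by rw [mem_preimage]; exact left_mem_segment ℝ _ _),
      hM x₁ x₂, isPreconnected_connectedComponentIn⟩
    intro z hz
    have h1 := connectedComponentIn_subset _ _ hz
    rw [mem_preimage] at h1
    have he : Ψ x₂ = Ψ x₁ := by rw [hx₁, hx₂]
    rw [he, segment_same] at h1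
    rw [mem_singleton_iff] at h1
    rw [mem_preimage, mem_singleton_iff, h1, hx₁]
  have hA : Convex ℝ (Set.range Ψ) := by
    rw [convex_iff_segment_subset]
    rintro _ ⟨x₀, rfl⟩ _ ⟨x₁, rfl⟩
    set C := connectedComponentIn (Ψ ⁻¹' segment ℝ (Ψ x₀) (Ψ x₁)) x₀ with hCdef
    have h1 : IsPreconnected (Ψ '' C) :=
      isPreconnected_connectedComponentIn.image _ hcont.continuousOn
    have h2 : Ψ '' C ⊆ segment ℝ (Ψ x₀) (Ψ x₁) := by
      rintro _ ⟨z, hz, rfl⟩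
      have h5 : z ∈ Ψ ⁻¹' segment ℝ (Ψ x₀) (Ψ x₁) := connectedComponentIn_subset _ _ hz
      exact h5
    have h3 : Ψ x₀ ∈ Ψ '' C := ⟨x₀, mem_connectedComponentIn
      (by rw [mem_preimage]; exact left_mem_segment ℝ _ _), rfl⟩
    have h4 : Ψ x₁ ∈ Ψ '' C := ⟨x₁, hM x₀ x₁, rfl⟩
    refine (seg_filled h1 h2 h3 h4).trans ?_
    rintro _ ⟨z, -, rfl⟩
    exact mem_range_self z
  refine ⟨hA, hB, ?_⟩
  intro O hO
  have hclaim : ∀ w ∈ Ψ '' O, ∃ δ > 0, ∀ v ∈ Set.range Ψ, v ∈ ball w δ → v ∈ Ψ '' O := by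
    rintro w ⟨xw, hxwO, rfl⟩
    have hwT : Ψ xw ∈ T := hmem xw
    set F := Ψ ⁻¹' {Ψ xw} with hFdef
    have hFcp : IsCompact F :=
      hproper _ (singleton_subset_iff.2 hwT) isCompact_singleton
    have hFconn : IsConnected F := hB _ (mem_range_self xw)
    have hFne : xw ∈ F := by rw [hFdef, mem_preimage, mem_singleton_iff]
    set A := {z | z ∈ F ∧ ∃ δ > 0,
      (Ψ '' (U xw)) ∩ ball (Ψ xw) δ ⊆ Ψ '' (U z) ∧
      (Ψ '' (U z)) ∩ ball (Ψ xw) δ ⊆ Ψ '' (U xw)} with hAdef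
    have hxwA : xw ∈ A :=
      ⟨hFne, 1, one_pos, inter_subset_left, inter_subset_left⟩
    have htrans : ∀ z'' ∈ F, ∀ z : X, z'' ∈ U z → ∃ δ > 0,
        (Ψ '' (U z)) ∩ ball (Ψ xw) δ ⊆ Ψ '' (U z'') ∧
        (Ψ '' (U z'')) ∩ ball (Ψ xw) δ ⊆ Ψ '' (U z) := by
      intro z'' hz''F z hz''Uz
      have hz''w : Ψ z'' = Ψ xw := by
        rw [hFdef, mem_preimage, mem_singleton_iff] at hz''F
        exact hz''F
      exact germ_transfer (hUo z) (hUo z'') (hUt z) (hUt z'') hz''Uz (hUm z'') hz''w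
    have hAopen : ∀ z ∈ A, ∀ z'' ∈ F, z'' ∈ U z → z'' ∈ A := by
      intro z hzA z'' hz''F hz''Uz
      obtain ⟨hzF, δ₁, hδ₁, h1, h2⟩ := hzA
      obtain ⟨δ₂, hδ₂, h3, h4⟩ := htrans z'' hz''F z hz''Uz
      refine ⟨hz''F, min δ₁ δ₂, lt_min hδ₁ hδ₂, ?_, ?_⟩
      · rintro v ⟨hv1, hv2⟩
        have ha : v ∈ Ψ '' (U z) := h1 ⟨hv1, ball_subset_ball (min_le_left _ _) hv2⟩
        exact h3 ⟨ha, ball_subset_ball (min_le_right _ _) hv2⟩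
      · rintro v ⟨hv1, hv2⟩
        have ha : v ∈ Ψ '' (U z) := h4 ⟨hv1, ball_subset_ball (min_le_right _ _) hv2⟩
        exact h2 ⟨ha, ball_subset_ball (min_le_left _ _) hv2⟩
    have hAcompl : ∀ z ∈ F, z ∉ A → ∀ z'' ∈ F, z'' ∈ U z → z'' ∉ A := by
      intro z hzF hzA z'' hz''F hz''Uz hz''A
      apply hzA
      obtain ⟨-, δ₁, hδ₁, h1, h2⟩ := hz''A
      obtain ⟨δ₂, hδ₂, h3, h4⟩ := htrans z'' hz''F z hz''Uz
      refine ⟨hzF, min δ₁ δ₂, lt_min hδ₁ hδ₂, ?_, ?_⟩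
      · rintro v ⟨hv1, hv2⟩
        have ha : v ∈ Ψ '' (U z'') := h1 ⟨hv1, ball_subset_ball (min_le_left _ _) hv2⟩
        exact h4 ⟨ha, ball_subset_ball (min_le_right _ _) hv2⟩
      · rintro v ⟨hv1, hv2⟩
        have ha : v ∈ Ψ '' (U z'') := h3 ⟨hv1, ball_subset_ball (min_le_right _ _) hv2⟩
        exact h2 ⟨ha, ball_subset_ball (min_le_left _ _) hv2⟩
    have hAF : ∀ z ∈ F, z ∈ A := by
      by_contra hno
      push_neg at hno
      obtain ⟨z₀, hz₀F, hz₀A⟩ := hno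
      have hpre := hFconn.isPreconnected
      obtain ⟨q, hqF, hqOA, hqOB⟩ := hpre (⋃ z ∈ A, U z) (⋃ z ∈ {z | z ∈ F ∧ z ∉ A}, U z)
        (isOpen_biUnion fun z _ => hUo z) (isOpen_biUnion fun z _ => hUo z)
        (by
          intro z hz
          by_cases hzA : z ∈ A
          · exact Or.inl (mem_biUnion hzA (hUm z))
          · exact Or.inr (mem_biUnion (⟨hz, hzA⟩ : z ∈ {z | z ∈ F ∧ z ∉ A}) (hUm z)))
        ⟨xw, hFne, mem_biUnion hxwA (hUm xw)⟩
        ⟨z₀, hz₀F, mem_biUnion (⟨hz₀F, hz₀A⟩ : z₀ ∈ {z | z ∈ F ∧ z ∉ A}) (hUm z₀)⟩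
      simp only [mem_iUnion, exists_prop] at hqOA hqOB
      obtain ⟨z1, hz1A, hq1⟩ := hqOA
      obtain ⟨z2, ⟨hz2F, hz2A⟩, hq2⟩ := hqOB
      exact (hAcompl z2 hz2F hz2A q hqF hq2) (hAopen z1 hz1A q hqF hq1)
    obtain ⟨t, ht⟩ := hFcp.elim_finite_subcover (fun z : ↥F => U z.1)
      (fun z => hUo z.1) (fun q hq => mem_iUnion.2 ⟨⟨q, hq⟩, hUm q⟩)
    obtain ⟨ε, hεpos, hεsub⟩ := tube_lemma' hmem hproper hwT
      (isOpen_biUnion fun (z : ↥F) _ => hUo z.1) ht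
    obtain ⟨V₀, hV₀o, hV₀eq⟩ := hUt xw O hO
    have hwV₀ : Ψ xw ∈ V₀ := by
      have h1 : Ψ xw ∈ Ψ '' (O ∩ U xw) := ⟨xw, ⟨hxwO, hUm xw⟩, rfl⟩
      rw [hV₀eq] at h1
      exact h1.1
    obtain ⟨ρ₀, hρ₀pos, hρ₀⟩ := Metric.isOpen_iff.1 hV₀o _ hwV₀
    have hgerm : ∀ z : ↥F, ∃ δ > 0,
        (Ψ '' (U z.1)) ∩ ball (Ψ xw) δ ⊆ Ψ '' (U xw) := by
      intro z
      obtain ⟨-, δ', hδ', -, h2⟩ := hAF z.1 z.2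
      exact ⟨δ', hδ', h2⟩
    choose δg hδgpos hδgsub using hgerm
    have htne : t.Nonempty := by
      rcases Finset.eq_empty_or_nonempty t with h | h
      · exfalso
        have h2 := ht hFne
        rw [h] at h2
        simpa using h2
      · exact h
    refine ⟨min (min ε ρ₀) (t.inf' htne δg), ?_, ?_⟩
    · apply lt_min (lt_min hεpos hρ₀pos)
      rw [Finset.lt_inf'_iff]
      exact fun z _ => hδgpos z
    · rintro v ⟨q, rfl⟩ hvball
      have hqtube : q ∈ ⋃ z ∈ t, U (z : ↥F).1 := by
        apply hεsub
        rw [mem_preimage]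
        exact ball_subset_ball (le_trans (min_le_left _ _) (min_le_left _ _)) hvball
      simp only [mem_iUnion, exists_prop] at hqtube
      obtain ⟨z, hzt, hqUz⟩ := hqtube
      have h1 : Ψ q ∈ Ψ '' (U z.1) := ⟨q, hqUz, rfl⟩
      have h2 : Ψ q ∈ Ψ '' (U xw) := hδgsub z ⟨h1,
        ball_subset_ball (le_trans (min_le_right _ _) (Finset.inf'_le _ hzt)) hvball⟩
      have h3 : Ψ q ∈ V₀ := hρ₀
        (ball_subset_ball (le_trans (min_le_left _ _) (min_le_right _ _)) hvball)
      have h4 : Ψ q ∈ Ψ '' (O ∩ U xw) := by rw [hV₀eq]; exact ⟨h3, h2⟩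
      obtain ⟨q', ⟨hq'O, -⟩, hq'⟩ := h4
      exact ⟨q', hq'O, hq'⟩
  choose! δ hδpos hδ using hclaim
  refine ⟨⋃ w ∈ Ψ '' O, ball w (δ w), isOpen_biUnion fun w _ => isOpen_ball, ?_⟩
  rw [Set.inter_univ, Set.image_univ]
  apply Subset.antisymm
  · intro v hv
    refine ⟨mem_biUnion hv (mem_ball_self (hδpos v hv)), ?_⟩
    obtain ⟨q, hqO, rfl⟩ := hv
    exact mem_range_self q
  · rintro v ⟨hv1, hv2⟩
    simp only [mem_iUnion, exists_prop] at hv1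
    obtain ⟨w, hw, hball⟩ := hv1
    exact hδ w hw v hv2 hball


/-- Local convexity and openness imply: convex image, connected level sets, and openness
onto the image. -/
theorem convex_image_connected_fibers_open {n : ℕ} {X : Type*} [TopologicalSpace X]
    [T2Space X] [ConnectedSpace X]
    (T : Set (EuclideanSpace ℝ (Fin n))) (hT : Convex ℝ T)
    (Ψ : X → EuclideanSpace ℝ (Fin n)) (hcont : Continuous Ψ) (hmem : ∀ x, Ψ x ∈ T)
    (hproper : ∀ K : Set (EuclideanSpace ℝ (Fin n)), K ⊆ T → IsCompact K →
      IsCompact (Ψ ⁻¹' K))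
    (hloc : ∀ x : X, ∃ U : Set X, IsOpen U ∧ x ∈ U ∧ IsConvexMapOn Ψ U ∧ IsOpenOnto Ψ U) :
    Convex ℝ (Set.range Ψ) ∧
    (∀ w ∈ Set.range Ψ, IsConnected (Ψ ⁻¹' {w})) ∧
    IsOpenOnto Ψ Set.univ := by
  exact convex_image_connected_fibers_open' T hT Ψ hcont hmem hproper hloc
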